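/- Let α be a topological space, I an admissible ideal on ℕ, η : ℕ → α a sequence and x ∈ α. If every subsequence of η (i.e., every composition η ∘ φ with φ : ℕ → ℕ strictly increasing) has a further subsequence that is I-convergent to x, then η is I-convergent to x. -/

import Mathlib

/-- An ideal on ℕ: a collection of subsets of ℕ containing ∅,
closed under subsets and finite unions. -/
structure IsIdeal (I : Set (Set ℕ)) : Prop where
  empty_mem : (∅ : Set ℕ) ∈ I
  subset_mem : ∀ {A B : Set ℕ}, A ∈ I → B ⊆ A → B ∈ I
  union_mem : ∀ {A B : Set ℕ}, A ∈ I → B ∈ I → A ∪ B ∈ I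

/-- A non-trivial ideal: an ideal with I ≠ {∅} and ℕ ∉ I. -/
def IsNonTrivialIdeal (I : Set (Set ℕ)) : Prop :=
  IsIdeal I ∧ I ≠ {∅} ∧ (Set.univ : Set ℕ) ∉ I

/-- An admissible ideal: a non-trivial ideal containing every singleton. -/
def IsAdmissibleIdeal (I : Set (Set ℕ)) : Prop :=
  IsNonTrivialIdeal I ∧ ∀ n : ℕ, ({n} : Set ℕ) ∈ I

variable {α : Type*} [TopologicalSpace α]

/-- A sequence η is I-convergent to x if for every neighborhood U of x,
the set {n | η n ∉ U} belongs to I. -/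
def IConv (I : Set (Set ℕ)) (η : ℕ → α) (x : α) : Prop :=
  ∀ U ∈ nhds x, {n : ℕ | η n ∉ U} ∈ I

/-- A sequence η is I*-convergent to x if there is P ⊆ ℕ with ℕ \ P ∈ I such that
the subsequence indexed by P converges to x (for every neighborhood U of x,
{n ∈ P | η n ∉ U} is finite). -/
def IStarConv (I : Set (Set ℕ)) (η : ℕ → α) (x : α) : Prop :=
  ∃ P : Set ℕ, Pᶜ ∈ I ∧ ∀ U ∈ nhds x, {n : ℕ | n ∈ P ∧ η n ∉ U}.Finite

/-- x is an I-limit point of η if there exists P ∉ I such that the subsequence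
of η indexed by P converges to x. -/
def IsILimitPt (I : Set (Set ℕ)) (η : ℕ → α) (x : α) : Prop :=
  ∃ P : Set ℕ, P ∉ I ∧ ∀ U ∈ nhds x, {n : ℕ | n ∈ P ∧ η n ∉ U}.Finite

/-- x is an I-cluster point of η if for every neighborhood U of x,
{n | η n ∈ U} ∉ I. -/
def IsIClusterPt (I : Set (Set ℕ)) (η : ℕ → α) (x : α) : Prop :=
  ∀ U ∈ nhds x, {n : ℕ | η n ∈ U} ∉ I

/-- Condition (AP): for every countable family of pairwise disjoint sets in I there
is a countable family K with each symmetric difference Hᵢ Δ Kᵢ finite and ⋃ Kᵢ ∈ I. -/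
def APCondition (I : Set (Set ℕ)) : Prop :=
  ∀ H : ℕ → Set ℕ, (∀ i, H i ∈ I) → Pairwise (Function.onFun Disjoint H) →
    ∃ K : ℕ → Set ℕ, (∀ i, (symmDiff (H i) (K i)).Finite) ∧ (⋃ i, K i) ∈ I

theorem stmt_2 (I : Set (Set ℕ)) (hI : IsAdmissibleIdeal I)
    (η : ℕ → α) (x : α)
    (h : ∀ φ : ℕ → ℕ, StrictMono φ →
      ∃ ψ : ℕ → ℕ, StrictMono ψ ∧ IConv I (η ∘ φ ∘ ψ) x) :
    IConv I η x := by
  obtain ⟨⟨hid, _, huniv⟩, hsing⟩ := hI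
  -- finite sets are in I
  have hfin : ∀ s : Set ℕ, s.Finite → s ∈ I := by
    intro s hs
    refine Set.Finite.induction_on (motive := fun s _ => s ∈ I) s hs hid.empty_mem ?_
    intro a t _ _ ih
    rw [Set.insert_eq]
    exact hid.union_mem (hsing a) ih
  intro U hU
  by_contra hnot
  have hinf : {n : ℕ | η n ∉ U}.Infinite := fun hF => hnot (hfin _ hF)
  classical
  have : Infinite {n : ℕ | η n ∉ U} := hinf.to_subtype
  set φ := Nat.orderEmbeddingOfSet {n : ℕ | η n ∉ U}
  have hrange : Set.range φ = {n : ℕ | η n ∉ U} := Nat.orderEmbeddingOfSet_range _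
  obtain ⟨ψ, hψ, hconv⟩ := h φ φ.strictMono
  have := hconv U hU
  have heq : {n : ℕ | (η ∘ φ ∘ ψ) n ∉ U} = Set.univ := by
    ext n
    simp only [Set.mem_setOf_eq, Set.mem_univ, iff_true, Function.comp_apply]
    have : φ (ψ n) ∈ Set.range φ := Set.mem_range_self _
    rw [hrange] at this
    exact this
  rw [heq] at this
  exact huniv this
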